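/- Let φ : ℝ² → ℂ be a continuous function and let w : ℝ² → ℝ be a Schwartz function satisfying Δw(x) = |φ(x)|² w(x) for every x ∈ ℝ². Then w = 0. (Consequently, two Schwartz solutions of −Δu + |φ|²u = g with the same right-hand side coincide.) -/

import Mathlib

open Complex Filter Set

noncomputable section

abbrev Plane := EuclideanSpace ℝ (Fin 2)

/-- Partial derivative of a real-valued function on ℝ² in the `i`-th coordinate direction. -/
def pd (i : Fin 2) (f : Plane → ℝ) (x : Plane) : ℝ :=
  fderiv ℝ f x (EuclideanSpace.single i 1)

lemma pd_eq' {f : Plane → ℝ} {f' : Plane →L[ℝ] ℝ} {x : Plane}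
    (h : HasFDerivAt f f' x) (i : Fin 2) :
    pd i f x = f' (EuclideanSpace.single i 1) := by
  rw [pd, h.fderiv]

lemma contDiff_pd {f : Plane → ℝ} (hf : ContDiff ℝ ((⊤:ℕ∞):WithTop ℕ∞) f) (i : Fin 2) :
    ContDiff ℝ ((⊤:ℕ∞):WithTop ℕ∞) (pd i f) := by
  have h1 : ContDiff ℝ ((⊤:ℕ∞):WithTop ℕ∞) (fderiv ℝ f) := hf.fderiv_right (by simp)
  exact h1.clm_apply contDiff_const

lemma deriv2_nonpos_of_isLocalMax {g : ℝ → ℝ} (hg : ContDiff ℝ ((⊤:ℕ∞):WithTop ℕ∞) g)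
    (h : IsLocalMax g 0) : deriv (deriv g) 0 ≤ 0 := by
  by_contra hpos
  push_neg at hpos
  have hdg : Differentiable ℝ g := hg.differentiable (by simp)
  have hg' : ContDiff ℝ ((⊤:ℕ∞):WithTop ℕ∞) (deriv g) :=
    (contDiff_infty_iff_deriv.mp (by exact_mod_cast hg)).2
  have h0 : deriv g 0 = 0 := h.deriv_eq_zero
  have hd : HasDerivAt (deriv g) (deriv (deriv g) 0) 0 :=
    (hg'.differentiable (by simp) 0).hasDerivAt
  have hslope : Tendsto (slope (deriv g) 0) (nhdsWithin 0 {(0:ℝ)}ᶜ)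
      (nhds (deriv (deriv g) 0)) := hasDerivAt_iff_tendsto_slope.mp hd
  have h1 : ∀ᶠ t in nhdsWithin 0 {(0:ℝ)}ᶜ, 0 < slope (deriv g) 0 t :=
    hslope.eventually (eventually_gt_nhds hpos)
  have h2 : ∀ᶠ t in nhdsWithin 0 (Set.Ioi 0), 0 < slope (deriv g) 0 t :=
    h1.filter_mono (nhdsWithin_mono 0 (fun t ht => ne_of_gt ht))
  have hpos' : ∀ᶠ t in nhdsWithin 0 (Set.Ioi 0), 0 < deriv g t := by
    filter_upwards [h2, self_mem_nhdsWithin] with t h1t h2t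
    rw [slope_def_field, h0, sub_zero, sub_zero] at h1t
    have := mul_pos h1t (show (0:ℝ) < t from h2t)
    rwa [div_mul_cancel₀ _ (ne_of_gt (show (0:ℝ) < t from h2t))] at this
  have hmax : ∀ᶠ t in nhdsWithin 0 (Set.Ioi 0), g t ≤ g 0 :=
    (h.filter_mono nhdsWithin_le_nhds)
  obtain ⟨u, hu, hsub⟩ := mem_nhdsGT_iff_exists_Ioo_subset.mp (hpos'.and hmax)
  have hu0 : (0:ℝ) < u := hu
  have hb0 : (0:ℝ) < u/2 := by linarith
  have hbu : u/2 < u := by linarith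
  have hmono : StrictMonoOn g (Set.Icc 0 (u/2)) :=
    strictMonoOn_of_deriv_pos (convex_Icc _ _) hdg.continuous.continuousOn
      (fun x hx => by
        rw [interior_Icc] at hx
        exact (hsub ⟨hx.1, lt_trans hx.2 hbu⟩).1)
  have hlt : g 0 < g (u/2) :=
    hmono ⟨le_rfl, le_of_lt hb0⟩ ⟨le_of_lt hb0, le_rfl⟩ hb0
  have hle : g (u/2) ≤ g 0 := (hsub ⟨hb0, hbu⟩).2
  linarith

lemma pd_pd_nonpos_of_isLocalMax {f : Plane → ℝ} (hf : ContDiff ℝ ((⊤:ℕ∞):WithTop ℕ∞) f)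
    {z : Plane} (h : IsLocalMax f z) (i : Fin 2) :
    pd i (pd i f) z ≤ 0 := by
  set e := EuclideanSpace.single i (1:ℝ) with he
  set L : ℝ → Plane := fun t => z + t • e with hL
  have hLc : ContDiff ℝ ((⊤:ℕ∞):WithTop ℕ∞) L :=
    contDiff_const.add (contDiff_id.smul contDiff_const)
  have hL0 : L 0 = z := by simp [hL]
  have hLd : ∀ t, HasDerivAt L e t := fun t => by
    simpa [hL] using ((hasDerivAt_id t).smul_const e).const_add z
  set g : ℝ → ℝ := fun t => f (L t) with hg
  have hgc : ContDiff ℝ ((⊤:ℕ∞):WithTop ℕ∞) g := hf.comp hLc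
  have hgmax : IsLocalMax g 0 := by
    have ht : Tendsto L (nhds 0) (nhds z) := by
      rw [← hL0]; exact hLc.continuous.continuousAt
    have hev := ht.eventually h
    unfold IsLocalMax IsMaxFilter
    filter_upwards [hev] with t htt
    simpa [hg, hL0] using htt
  have hderiv : deriv g = fun t => pd i f (L t) := by
    funext t
    have : HasDerivAt g (fderiv ℝ f (L t) e) t :=
      ((hf.differentiable (by simp) (L t)).hasFDerivAt).comp_hasDerivAt t (hLd t)
    rw [this.deriv]; rfl
  have hderiv2 : deriv (deriv g) 0 = pd i (pd i f) z := by
    rw [hderiv]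
    have : HasDerivAt (fun t => pd i f (L t)) (fderiv ℝ (pd i f) (L 0) e) 0 :=
      (((contDiff_pd hf i).differentiable (by simp) (L 0)).hasFDerivAt).comp_hasDerivAt 0 (hLd 0)
    rw [this.deriv, hL0]; rfl
  rw [← hderiv2]
  exact deriv2_nonpos_of_isLocalMax hgc hgmax

/-- If `w` is a Schwartz function on ℝ² with `Δw = |φ|² w` for a continuous `φ`,
then `w = 0`.  (Uniqueness for the elliptic equation `−Δu + |φ|²u = g`.) -/
theorem elliptic_uniqueness (φ : Plane → ℂ) (hφ : Continuous φ)
    (w : SchwartzMap Plane ℝ)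
    (hw : ∀ x : Plane, pd 0 (pd 0 (fun y => w y)) x + pd 1 (pd 1 (fun y => w y)) x =
      ‖φ x‖ ^ 2 * w x) :
    ∀ x : Plane, w x = 0 := by
  intro x₀
  set W : Plane → ℝ := fun y => w y with hWdef
  have hW : ContDiff ℝ ((⊤:ℕ∞):WithTop ℕ∞) W := w.smooth ⊤
  have hWdiff : ∀ x, HasFDerivAt W (fderiv ℝ W x) x :=
    fun x => (hW.differentiable (by simp) x).hasFDerivAt
  set v : Plane → ℝ := fun y => W y * W y with hvdef
  have hv : ContDiff ℝ ((⊤:ℕ∞):WithTop ℕ∞) v := hW.mul hW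
  have hpdv : ∀ i : Fin 2, pd i v = fun x => W x * pd i W x + W x * pd i W x := by
    intro i; funext x
    rw [hvdef, pd_eq' (f := fun y => W y * W y) ((hWdiff x).mul (hWdiff x)) i]
    simp [pd]
  have hpd2v : ∀ (i : Fin 2) (x : Plane),
      pd i (pd i v) x = 2 * (W x * pd i (pd i W) x) + 2 * (pd i W x * pd i W x) := by
    intro i x
    rw [hpdv i]
    have hD : HasFDerivAt (pd i W) (fderiv ℝ (pd i W) x) x :=
      ((contDiff_pd hW i).differentiable (by simp) x).hasFDerivAt
    have h1 := ((hWdiff x).mul hD).add ((hWdiff x).mul hD)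
    rw [pd_eq' (f := fun x => W x * pd i W x + W x * pd i W x) h1 i]
    simp [pd]
    ring
  have hΔv : ∀ x : Plane, 0 ≤ pd 0 (pd 0 v) x + pd 1 (pd 1 v) x := by
    intro x
    rw [hpd2v 0 x, hpd2v 1 x]
    have hwx' : pd 0 (pd 0 W) x + pd 1 (pd 1 W) x = ‖φ x‖ ^ 2 * W x := hw x
    have h2 : W x * (pd 0 (pd 0 W) x + pd 1 (pd 1 W) x)
        = W x * (‖φ x‖ ^ 2 * W x) := by rw [hwx']
    nlinarith [mul_self_nonneg (pd 0 W x), mul_self_nonneg (pd 1 W x),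
      mul_self_nonneg (‖φ x‖ * W x), h2]
  -- coordinates
  have coord_fd : ∀ (j : Fin 2) (x : Plane),
      HasFDerivAt (fun y : Plane => y j) (EuclideanSpace.proj j (𝕜 := ℝ)) x :=
    fun j x => (EuclideanSpace.proj j (𝕜 := ℝ)).hasFDerivAt
  set q : Plane → ℝ := fun y => y 0 * y 0 + y 1 * y 1 with hqdef
  have hqc : ContDiff ℝ ((⊤:ℕ∞):WithTop ℕ∞) q := by
    have c0 : ContDiff ℝ ((⊤:ℕ∞):WithTop ℕ∞) (fun y : Plane => y 0) :=
      (EuclideanSpace.proj (0 : Fin 2) (𝕜 := ℝ)).contDiff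
    have c1 : ContDiff ℝ ((⊤:ℕ∞):WithTop ℕ∞) (fun y : Plane => y 1) :=
      (EuclideanSpace.proj (1 : Fin 2) (𝕜 := ℝ)).contDiff
    exact (c0.mul c0).add (c1.mul c1)
  have hpdq : ∀ i : Fin 2, pd i q = fun x => 2 * x i := by
    intro i; funext x
    have h := ((coord_fd 0 x).mul (coord_fd 0 x)).add ((coord_fd 1 x).mul (coord_fd 1 x))
    rw [hqdef, pd_eq' (f := fun y : Plane => y 0 * y 0 + y 1 * y 1) h i]
    fin_cases i <;> simp [EuclideanSpace.single_apply] <;> ring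
  have hqnorm : ∀ x : Plane, q x = ‖x‖^2 := by
    intro x
    rw [EuclideanSpace.norm_eq, Real.sq_sqrt (by positivity)]
    simp [hqdef, Fin.sum_univ_two, _root_.sq_abs]
    ring
  have hqnonneg : ∀ x : Plane, 0 ≤ q x := fun x => by
    rw [hqnorm x]; positivity
  -- the key estimate
  have key : ∀ δ > 0, v x₀ ≤ δ := by
    intro δ hδ
    have hz : Tendsto W (cocompact Plane) (nhds 0) := zero_at_infty w
    have hvz : Tendsto v (cocompact Plane) (nhds 0) := by
      have := hz.mul hz
      simpa [hvdef] using this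
    have hev : ∀ᶠ x in cocompact Plane, v x < δ := hvz.eventually (eventually_lt_nhds hδ)
    obtain ⟨K, hKc, hKsub⟩ := mem_cocompact.mp hev
    obtain ⟨R₀, hR₀⟩ := hKc.isBounded.subset_closedBall 0
    set R : ℝ := max (‖x₀‖ + 1) (R₀ + 1) with hRdef
    have hRx : ‖x₀‖ < R := lt_of_lt_of_le (by linarith) (le_max_left _ _)
    have hRR₀ : R₀ < R := lt_of_lt_of_le (by linarith) (le_max_right _ _)
    have hR0 : 0 < R := lt_of_le_of_lt (norm_nonneg x₀) hRx
    have hx₀mem : x₀ ∈ Metric.closedBall (0:Plane) R := by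
      simpa [Metric.mem_closedBall, dist_zero_right] using hRx.le
    have hεstep : ∀ ε > 0, v x₀ ≤ δ + ε * R^2 := by
      intro ε hε
      set u : Plane → ℝ := fun y => v y + ε * q y with hudef
      have huc : ContDiff ℝ ((⊤:ℕ∞):WithTop ℕ∞) u := hv.add (contDiff_const.mul hqc)
      obtain ⟨z, hzmem, hzmax⟩ := (isCompact_closedBall (0:Plane) R).exists_isMaxOn
        ⟨x₀, hx₀mem⟩ huc.continuous.continuousOn
      have hzR : ‖z‖ = R := by
        by_contra hne
        have hzle : ‖z‖ ≤ R := by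
          simpa [Metric.mem_closedBall, dist_zero_right] using hzmem
        have hzlt : ‖z‖ < R := lt_of_le_of_ne hzle hne
        have hloc : IsLocalMax u z := hzmax.isLocalMax
          (Metric.closedBall_mem_nhds_of_mem
            (by simpa [Metric.mem_ball, dist_zero_right] using hzlt))
        have h0' := pd_pd_nonpos_of_isLocalMax huc hloc 0
        have h1' := pd_pd_nonpos_of_isLocalMax huc hloc 1
        have hcomp : ∀ i : Fin 2, pd i (pd i u) z = pd i (pd i v) z + ε * 2 := by
          intro i
          have hpdu : pd i u = fun x => pd i v x + ε * (2 * x i) := by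
            funext x
            have hvd : HasFDerivAt v (fderiv ℝ v x) x :=
              (hv.differentiable (by simp) x).hasFDerivAt
            have hqd : HasFDerivAt q (fderiv ℝ q x) x :=
              (hqc.differentiable (by simp) x).hasFDerivAt
            have h2 := hvd.add (hqd.const_mul ε)
            rw [hudef, pd_eq' (f := fun y => v y + ε * q y) h2 i]
            have hq' : pd i q x = 2 * x i := by rw [hpdq i]
            simp [pd]
            exact Or.inl hq'
          rw [hpdu]
          have hvD : HasFDerivAt (pd i v) (fderiv ℝ (pd i v) z) z :=
            ((contDiff_pd hv i).differentiable (by simp) z).hasFDerivAt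
          have hlin : HasFDerivAt (fun x : Plane => 2 * x i)
              ((2:ℝ) • EuclideanSpace.proj i (𝕜 := ℝ)) z := (coord_fd i z).const_mul 2
          have h3 := hvD.add (hlin.const_mul ε)
          rw [pd_eq' (f := fun x : Plane => pd i v x + ε * (2 * x i)) h3 i]
          simp [pd, EuclideanSpace.single_apply]
        have hsum := add_nonpos h0' h1'
        rw [hcomp 0, hcomp 1] at hsum
        have := hΔv z
        linarith
      have hzK : z ∉ K := by
        intro hzK
        have hmem := hR₀ hzK
        rw [Metric.mem_closedBall, dist_zero_right] at hmem
        rw [hzR] at hmem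
        linarith
      have hvzδ : v z < δ := hKsub hzK
      have h1 : u x₀ ≤ u z := hzmax hx₀mem
      have hqz : q z ≤ R^2 := by rw [hqnorm z, hzR]
      have hq0 : 0 ≤ q x₀ := hqnonneg x₀
      have hux₀ : v x₀ ≤ u x₀ := by
        have hx' : u x₀ = v x₀ + ε * q x₀ := rfl
        rw [hx']; nlinarith
      have huz : u z ≤ δ + ε * R^2 := by
        have hz' : u z = v z + ε * q z := rfl
        rw [hz']; nlinarith
      linarith
    refine le_of_forall_pos_le_add (fun η hη => ?_)
    have hR2 : (0:ℝ) < R^2 := by positivity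
    have := hεstep (η / R^2) (by positivity)
    calc v x₀ ≤ δ + (η / R^2) * R^2 := this
      _ = δ + η := by field_simp
  have hv0 : v x₀ ≤ 0 := by
    by_contra hc
    push_neg at hc
    have := key (v x₀ / 2) (by linarith)
    linarith
  have : W x₀ * W x₀ = 0 := le_antisymm hv0 (mul_self_nonneg _)
  exact mul_self_eq_zero.mp this

end
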